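/- For n ≥ 2, e ≥ 1, and p prime, the number of subrings R ⊆ Z^n with [Z^n : R] = p^e and cyclic quotient Z^n/R is exactly binomial(n,2). Explicitly, for each 1 ≤ i ≤ n-1 there are exactly n-i such subrings whose Hermite normal form matrix has p^e in position (i,i), and summing gives binomial(n,2). -/

import Mathlib

def colSpan {n : ℕ} (A : Matrix (Fin n) (Fin n) ℤ) : AddSubgroup (Fin n → ℤ) :=
  AddSubgroup.closure (Set.range fun j => fun i => A i j)

def IsSubringOf {n : ℕ} (R : AddSubgroup (Fin n → ℤ)) : Prop :=
  (fun _ => (1 : ℤ)) ∈ R ∧ ∀ u v : Fin n → ℤ, u ∈ R → v ∈ R → u * v ∈ R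

def IsHNF {n : ℕ} (A : Matrix (Fin n) (Fin n) ℤ) : Prop :=
  (∀ i j : Fin n, (j : ℕ) < (i : ℕ) → A i j = 0) ∧
  (∀ i j : Fin n, (i : ℕ) < (j : ℕ) → 0 ≤ A i j ∧ A i j < A i i)

def IsSubringMatrix {n : ℕ} (A : Matrix (Fin n) (Fin n) ℤ) : Prop :=
  IsHNF A ∧ A.det ≠ 0 ∧ IsSubringOf (colSpan A)

def GenLE {n : ℕ} (R : AddSubgroup (Fin n → ℤ)) (k : ℕ) : Prop :=
  ∃ S : Finset ((Fin n → ℤ) ⧸ R), S.card ≤ k ∧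
    AddSubgroup.closure (S : Set ((Fin n → ℤ) ⧸ R)) = ⊤

def RankGe {n : ℕ} (R : AddSubgroup (Fin n → ℤ)) (k : ℕ) : Prop :=
  ∀ S : Finset ((Fin n → ℤ) ⧸ R),
    AddSubgroup.closure (S : Set ((Fin n → ℤ) ⧸ R)) = ⊤ → k ≤ S.card

def RankEq {n : ℕ} (R : AddSubgroup (Fin n → ℤ)) (k : ℕ) : Prop :=
  GenLE R k ∧ RankGe R k


private def E {n : ℕ} (k : Fin n) : Fin n → ℤ := fun t => if t = k then 1 else 0

private def stdHom (m : ℕ) {n : ℕ} (i j : Fin n) : (Fin n → ℤ) →+ ZMod m :=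
  AddMonoidHom.mk' (fun x => ((x i - x j : ℤ) : ZMod m)) (by
    intro a b
    simp only [Pi.add_apply]
    push_cast
    ring)

private def stdR (m : ℕ) {n : ℕ} (i j : Fin n) : AddSubgroup (Fin n → ℤ) := (stdHom m i j).ker

private lemma mem_stdR {m n : ℕ} {i j : Fin n} {x : Fin n → ℤ} :
    x ∈ stdR m i j ↔ ((x i : ZMod m)) = ((x j : ZMod m)) := by
  show ((x i - x j : ℤ) : ZMod m) = 0 ↔ _
  push_cast
  rw [sub_eq_zero]

private lemma stdR_subring {m n : ℕ} {i j : Fin n} : IsSubringOf (stdR m i j) := by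
  constructor
  · exact mem_stdR.mpr rfl
  · intro u v hu hv
    rw [mem_stdR] at hu hv ⊢
    push_cast
    rw [Pi.mul_apply, Pi.mul_apply]
    push_cast
    rw [hu, hv]

private lemma stdHom_surj {m n : ℕ} [NeZero m] {i j : Fin n} (hij : i ≠ j) :
    Function.Surjective (stdHom m i j) := by
  intro c
  refine ⟨fun t => if t = i then (c.val : ℤ) else 0, ?_⟩
  show ((_ - _ : ℤ) : ZMod m) = c
  simp [hij, Ne.symm hij, ZMod.natCast_zmod_val]

private lemma stdR_index {m n : ℕ} [NeZero m] {i j : Fin n} (hij : i ≠ j) :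
    (stdR m i j).index = m := by
  rw [AddSubgroup.index]
  exact (Nat.card_congr (QuotientAddGroup.quotientKerEquivOfSurjective _
    (stdHom_surj hij)).toEquiv).trans (Nat.card_zmod m)

private lemma stdR_cyclic {m n : ℕ} [NeZero m] {i j : Fin n} (hij : i ≠ j) :
    IsAddCyclic ((Fin n → ℤ) ⧸ stdR m i j) :=
  isAddCyclic_of_surjective
    (QuotientAddGroup.quotientKerEquivOfSurjective _ (stdHom_surj hij)).symm.toAddMonoidHom
    (AddEquiv.surjective _)

private lemma E_mem_iff {m n : ℕ} [Fact (1 < m)] {i j k : Fin n} (hij : i ≠ j) :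
    E k ∈ stdR m i j ↔ (k ≠ i ∧ k ≠ j) := by
  rw [mem_stdR]
  rcases eq_or_ne k i with rfl | hki
  · simp [E, hij, Ne.symm hij, (one_ne_zero : (1 : ZMod m) ≠ 0)]
  rcases eq_or_ne k j with rfl | hkj
  · simp [E, hij, Ne.symm hki, (one_ne_zero : (1 : ZMod m) ≠ 0), eq_comm]
  · simp [E, Ne.symm hki, Ne.symm hkj, hki, hkj]

private lemma prod_same {n : ℕ} {k i : Fin n} (hki : k ≠ i) (a b c d : ℤ) :
    (a • E k + b • E i) * (c • E k + d • E i) = (a * c) • E k + (b * d) • E i := by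
  funext t
  simp only [Pi.mul_apply, Pi.add_apply, Pi.smul_apply, smul_eq_mul, E]
  rcases eq_or_ne t k with rfl | h1 <;> rcases eq_or_ne t i with rfl | h2 <;>
    simp_all <;> ring

private lemma prod_cross {n : ℕ} {k l i : Fin n} (hkl : k ≠ l) (hki : k ≠ i) (hli : l ≠ i)
    (a b c d : ℤ) :
    (a • E k + b • E i) * (c • E l + d • E i) = (b * d) • E i := by
  funext t
  simp only [Pi.mul_apply, Pi.add_apply, Pi.smul_apply, smul_eq_mul, E]
  rcases eq_or_ne t k with rfl | h1 <;> rcases eq_or_ne t l with rfl | h2 <;>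
    rcases eq_or_ne t i with rfl | h3 <;> simp_all <;> ring

private lemma one_eq_sum {n : ℕ} : (fun _ : Fin n => (1 : ℤ)) = ∑ k : Fin n, E k := by
  funext t
  rw [Finset.sum_apply]
  simp [E]

private lemma x_eq_sum {n : ℕ} (x : Fin n → ℤ) : x = ∑ k : Fin n, x k • E k := by
  funext t
  rw [Finset.sum_apply]
  simp only [Pi.smul_apply, smul_eq_mul, E, mul_ite, mul_one, mul_zero]
  rw [Finset.sum_ite_eq]
  simp

private lemma eq_p_mul {p e : ℕ} (hp : p.Prime) (he : 1 ≤ e) (a : ZMod (p ^ e))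
    (ha : ¬ IsUnit a) : ∃ c, a = (p : ZMod (p ^ e)) * c := by
  haveI : NeZero (p ^ e) := ⟨pow_ne_zero e hp.ne_zero⟩
  have hv : ((a.val : ℕ) : ZMod (p ^ e)) = a := ZMod.natCast_zmod_val a
  have hcop : ¬ Nat.Coprime a.val (p ^ e) := by
    rw [← ZMod.isUnit_iff_coprime]
    rwa [hv]
  have hdvd : p ∣ a.val := by
    by_contra hnd
    exact hcop (Nat.Coprime.pow_right e ((Nat.Prime.coprime_iff_not_dvd hp).mpr hnd).symm)
  obtain ⟨c, hc⟩ := hdvd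
  exact ⟨(c : ZMod (p ^ e)), by rw [← hv, hc]; push_cast; ring⟩

private lemma unit_or_zero {p e : ℕ} (hp : p.Prime) (he : 1 ≤ e) (w a : ZMod (p ^ e))
    (h : a = w * a ^ 2) : IsUnit a ∨ a = 0 := by
  by_cases hu : IsUnit a
  · exact Or.inl hu
  right
  obtain ⟨c, hc⟩ := eq_p_mul hp he a hu
  have key : ∀ t : ℕ, a = w ^ t * a ^ (t + 1) := by
    intro t
    induction t with
    | zero => simp
    | succ t ih =>
      calc a = w * a ^ 2 := h
        _ = w * (a * a) := by ring
        _ = w * ((w ^ t * a ^ (t + 1)) * a) := by rw [← ih]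
        _ = w ^ (t + 1) * a ^ (t + 2) := by ring
  have hpe : (p : ZMod (p ^ e)) ^ e = 0 := by
    have : ((p ^ e : ℕ) : ZMod (p ^ e)) = 0 := ZMod.natCast_self _
    push_cast at this
    exact this
  have : a ^ (e + 1) = 0 := by
    have h2 : (p : ZMod (p ^ e)) ^ (e + 1) = 0 := by rw [pow_succ, hpe, zero_mul]
    rw [hc, mul_pow, h2, zero_mul]
  rw [key (e), this, mul_zero]

private lemma classify {n e p : ℕ} (he : 1 ≤ e) (hp : p.Prime)
    {R : AddSubgroup (Fin n → ℤ)} (hsub : IsSubringOf R) (hidx : R.index = p ^ e)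
    (hcyc : IsAddCyclic ((Fin n → ℤ) ⧸ R)) :
    ∃ i j : Fin n, i ≠ j ∧ R = stdR (p ^ e) i j := by
  have hm1 : 1 < p ^ e := Nat.one_lt_pow (by omega) hp.one_lt
  haveI : NeZero (p ^ e) := ⟨by omega⟩
  haveI : Fact (1 < p ^ e) := ⟨hm1⟩
  have hcard : Nat.card ((Fin n → ℤ) ⧸ R) = p ^ e := by rw [← hidx]; rfl
  have eqv : ((Fin n → ℤ) ⧸ R) ≃+ ZMod (p ^ e) := by
    rw [← hcard]; exact (zmodAddCyclicAddEquiv hcyc).symm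
  set φ : (Fin n → ℤ) →+ ZMod (p ^ e) := eqv.toAddMonoidHom.comp (QuotientAddGroup.mk' R)
    with hφ
  have hker : ∀ x : Fin n → ℤ, φ x = 0 ↔ x ∈ R := by
    intro x
    rw [hφ]
    simp only [AddMonoidHom.comp_apply, AddEquiv.coe_toAddMonoidHom, QuotientAddGroup.mk'_apply]
    rw [AddEquivClass.map_eq_zero_iff, QuotientAddGroup.eq_zero_iff]
  have hsurj : Function.Surjective φ := eqv.surjective.comp (QuotientAddGroup.mk'_surjective R)
  set ψ : Fin n → ZMod (p ^ e) := fun k => φ (E k) with hψ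
  have hphix : ∀ x : Fin n → ℤ, φ x = ∑ k, (x k : ZMod (p ^ e)) * ψ k := by
    intro x
    conv_lhs => rw [x_eq_sum x]
    rw [map_sum]
    refine Finset.sum_congr rfl fun k _ => ?_
    rw [map_zsmul, zsmul_eq_mul]
  have hcomb : ∀ (a b : ℤ) (k l : Fin n),
      φ (a • E k + b • E l) = (a : ZMod (p ^ e)) * ψ k + (b : ZMod (p ^ e)) * ψ l := by
    intro a b k l
    rw [map_add, map_zsmul, map_zsmul, zsmul_eq_mul, zsmul_eq_mul]
  have hsum : ∑ k, ψ k = 0 := by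
    have h1 : φ (fun _ => (1 : ℤ)) = 0 := (hker _).mpr hsub.1
    rw [one_eq_sum, map_sum] at h1
    exact h1
  -- existence of a unit coordinate
  obtain ⟨i, hu⟩ : ∃ i, IsUnit (ψ i) := by
    by_contra hno
    push_neg at hno
    obtain ⟨x, hx⟩ := hsurj 1
    choose c hc using fun k => eq_p_mul hp he (ψ k) (hno k)
    have h1 : (1 : ZMod (p ^ e)) = (p : ZMod (p ^ e)) * ∑ k, (x k : ZMod (p ^ e)) * c k := by
      rw [← hx, hphix, Finset.mul_sum]
      refine Finset.sum_congr rfl fun k _ => ?_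
      rw [hc k]; ring
    have hup : IsUnit ((p : ℕ) : ZMod (p ^ e)) := IsUnit.of_mul_eq_one _ h1.symm
    rw [ZMod.isUnit_iff_coprime] at hup
    have hd : p ∣ Nat.gcd p (p ^ e) := Nat.dvd_gcd dvd_rfl (dvd_pow_self p (by omega))
    rw [Nat.Coprime] at hup
    rw [hup] at hd
    exact absurd (Nat.dvd_one.mp hd) (by have := hp.one_lt; omega)
  -- pairwise relations
  have hrel : ∀ k, k ≠ i → ψ k * ψ i = -(ψ k * ψ k) := by
    intro k hk
    set x : Fin n → ℤ := (((ψ i).val : ℤ)) • E k + (-((ψ k).val : ℤ)) • E i with hxdef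
    have hxR : x ∈ R := by
      rw [← hker, hxdef, hcomb]
      push_cast [ZMod.natCast_zmod_val]
      ring
    have hx2 : x * x ∈ R := hsub.2 x x hxR hxR
    rw [hxdef, prod_same hk, ← hker, hcomb] at hx2
    push_cast [ZMod.natCast_zmod_val] at hx2
    have h2 : ψ i * (ψ i * ψ k + ψ k * ψ k) = 0 := by linear_combination hx2
    have h3 := (IsUnit.mul_right_eq_zero hu).mp h2
    linear_combination h3
  have hcross : ∀ k l, k ≠ i → l ≠ i → k ≠ l → ψ k * ψ l = 0 := by
    intro k l hk hl hkl
    set x : Fin n → ℤ := (((ψ i).val : ℤ)) • E k + (-((ψ k).val : ℤ)) • E i with hxdef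
    set y : Fin n → ℤ := (((ψ i).val : ℤ)) • E l + (-((ψ l).val : ℤ)) • E i with hydef
    have hxR : x ∈ R := by
      rw [← hker, hxdef, hcomb]; push_cast [ZMod.natCast_zmod_val]; ring
    have hyR : y ∈ R := by
      rw [← hker, hydef, hcomb]; push_cast [ZMod.natCast_zmod_val]; ring
    have hxy : x * y ∈ R := hsub.2 x y hxR hyR
    rw [hxdef, hydef, prod_cross hkl hk hl, ← hker, map_zsmul, zsmul_eq_mul] at hxy
    push_cast [ZMod.natCast_zmod_val] at hxy
    have h2 : ψ i * (ψ k * ψ l) = 0 := by linear_combination hxy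
    exact (IsUnit.mul_right_eq_zero hu).mp h2
  have hUorZ : ∀ k, k ≠ i → ψ k ≠ 0 → IsUnit (ψ k) := by
    intro k hk hkne
    rcases hu with ⟨u, huu⟩
    have h3 : ψ k * ψ i = -(ψ k * ψ k) := hrel k hk
    have h4 : ψ k = (-(↑u⁻¹ : ZMod (p ^ e))) * ψ k ^ 2 := by
      have h5 : ψ k * ψ i * (↑u⁻¹ : ZMod (p ^ e)) = ψ k := by
        rw [← huu, mul_assoc, Units.mul_inv, mul_one]
      calc ψ k = ψ k * ψ i * (↑u⁻¹ : ZMod (p ^ e)) := h5.symm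
        _ = -(ψ k * ψ k) * (↑u⁻¹ : ZMod (p ^ e)) := by rw [h3]
        _ = (-(↑u⁻¹ : ZMod (p ^ e))) * ψ k ^ 2 := by ring
    exact (unit_or_zero hp he _ _ h4).resolve_right hkne
  -- find the partner j
  obtain ⟨j, hji, hjne⟩ : ∃ j, j ≠ i ∧ ψ j ≠ 0 := by
    by_contra hno
    push_neg at hno
    have h1 : ∑ k, ψ k = ψ i := by
      rw [← Finset.add_sum_erase _ ψ (Finset.mem_univ i),
        Finset.sum_eq_zero (fun k hk => hno k (Finset.ne_of_mem_erase hk)), add_zero]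
    rw [hsum] at h1
    exact hu.ne_zero h1.symm
  have hju : IsUnit (ψ j) := hUorZ j hji hjne
  have hzero : ∀ k, k ≠ i → k ≠ j → ψ k = 0 := by
    intro k hk hkj
    have := hcross k j hk hji hkj
    exact (IsUnit.mul_left_eq_zero hju).mp this
  have hij2 : ψ i + ψ j = 0 := by
    have h1 : ∑ k ∈ ({i, j} : Finset (Fin n)), ψ k = ∑ k, ψ k :=
      Finset.sum_subset (Finset.subset_univ _) (by
        intro k _ hk
        simp only [Finset.mem_insert, Finset.mem_singleton, not_or] at hk
        exact hzero k hk.1 hk.2)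
    rw [hsum, Finset.sum_pair (Ne.symm hji)] at h1
    exact h1
  refine ⟨i, j, Ne.symm hji, ?_⟩
  ext x
  rw [mem_stdR, ← hker, hphix]
  have hexp : ∑ k, (x k : ZMod (p ^ e)) * ψ k
      = ψ i * ((x i : ZMod (p ^ e)) - (x j : ZMod (p ^ e))) := by
    rw [← Finset.sum_subset (Finset.subset_univ ({i, j} : Finset (Fin n))) (by
      intro k _ hk
      simp only [Finset.mem_insert, Finset.mem_singleton, not_or] at hk
      rw [hzero k hk.1 hk.2, mul_zero])]
    rw [Finset.sum_pair (Ne.symm hji)]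
    have hψj : ψ j = -ψ i := by linear_combination hij2
    rw [hψj]; ring
  rw [hexp]
  constructor
  · intro h
    exact sub_eq_zero.mp ((IsUnit.mul_right_eq_zero hu).mp h)
  · intro h
    rw [sub_eq_zero.mpr h, mul_zero]

private lemma stdR_symm {m n : ℕ} {i j : Fin n} : stdR m i j = stdR m j i := by
  ext x
  rw [mem_stdR, mem_stdR, eq_comm]

private lemma stdR_inj {m n : ℕ} [Fact (1 < m)] {i j i' j' : Fin n}
    (hij : i < j) (hij' : i' < j') (h : stdR m i j = stdR m i' j') : i = i' ∧ j = j' := by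
  have key : ∀ k : Fin n, (k = i ∨ k = j) ↔ (k = i' ∨ k = j') := by
    intro k
    have h1 := (E_mem_iff (m := m) (k := k) hij.ne)
    have h2 := (E_mem_iff (m := m) (k := k) hij'.ne)
    rw [h, h2] at h1
    constructor
    · intro hk
      by_contra hc
      push_neg at hc
      have := h1.mp ⟨hc.1, hc.2⟩
      rcases hk with rfl | rfl
      · exact this.1 rfl
      · exact this.2 rfl
    · intro hk
      by_contra hc
      push_neg at hc
      have := h1.mpr ⟨hc.1, hc.2⟩
      rcases hk with rfl | rfl
      · exact this.1 rfl
      · exact this.2 rfl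
  have ki := (key i).mp (Or.inl rfl)
  have kj := (key j).mp (Or.inr rfl)
  have ki' := (key i').mpr (Or.inl rfl)
  have kj' := (key j').mpr (Or.inr rfl)
  have hij5 : (i : ℕ) < (j : ℕ) := hij
  have hij6 : (i' : ℕ) < (j' : ℕ) := hij'
  constructor <;> (apply Fin.ext)
  all_goals
    rcases ki with rfl | rfl <;> rcases kj with rfl | rfl <;>
      rcases ki' with h1 | h1 <;> rcases kj' with h2 | h2 <;>
      first
      | rfl
      | (first
          | omega
          | (exact absurd (congrArg Fin.val h1) (by omega))
          | (exact absurd (congrArg Fin.val h2) (by omega))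
          | (rw [h1] at hij6 ⊢; omega)
          | (rw [h2] at hij6 ⊢; omega))

private def pairEquiv (n : ℕ) : (Σ j : Fin n, Fin j.val) ≃ {q : Fin n × Fin n // q.1 < q.2} where
  toFun x := ⟨(⟨x.2.val, lt_trans x.2.isLt x.1.isLt⟩, x.1), x.2.isLt⟩
  invFun q := ⟨q.1.2, ⟨q.1.1.val, q.2⟩⟩
  left_inv x := rfl
  right_inv q := rfl

private lemma card_pairs (n : ℕ) : Nat.card {q : Fin n × Fin n // q.1 < q.2} = n.choose 2 := by
  rw [Nat.card_eq_fintype_card, ← Fintype.card_congr (pairEquiv n), Fintype.card_sigma]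
  simp only [Fintype.card_fin]
  rw [Fin.sum_univ_eq_sum_range (fun k => k) n, Nat.choose_two_right,
    ← Finset.sum_range_id_mul_two n, Nat.mul_div_cancel _ two_pos]

theorem count_cocyclic_subrings (n e p : ℕ) (hn : 2 ≤ n) (he : 1 ≤ e) (hp : p.Prime) :
    Nat.card {R : AddSubgroup (Fin n → ℤ) // IsSubringOf R ∧ R.index = p ^ e ∧
      IsAddCyclic ((Fin n → ℤ) ⧸ R)} = n.choose 2 := by
  have hm1 : 1 < p ^ e := Nat.one_lt_pow (by omega) hp.one_lt
  haveI : NeZero (p ^ e) := ⟨by omega⟩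
  haveI : Fact (1 < p ^ e) := ⟨hm1⟩
  have hbij : Function.Bijective (fun q : {q : Fin n × Fin n // q.1 < q.2} =>
      (⟨stdR (p ^ e) q.1.1 q.1.2, stdR_subring, stdR_index q.2.ne, stdR_cyclic q.2.ne⟩ :
        {R : AddSubgroup (Fin n → ℤ) // IsSubringOf R ∧ R.index = p ^ e ∧
          IsAddCyclic ((Fin n → ℤ) ⧸ R)})) := by
    constructor
    · rintro ⟨⟨i, j⟩, hij⟩ ⟨⟨i', j'⟩, hij'⟩ h
      have h2 : stdR (p ^ e) i j = stdR (p ^ e) i' j' := congrArg Subtype.val h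
      obtain ⟨h3, h4⟩ := stdR_inj hij hij' h2
      exact Subtype.ext (Prod.ext h3 h4)
    · rintro ⟨R, hsub, hidx, hcyc⟩
      obtain ⟨i, j, hij, hR⟩ := classify he hp hsub hidx hcyc
      rcases lt_or_gt_of_ne hij with hlt | hgt
      · exact ⟨⟨(i, j), hlt⟩, Subtype.ext hR.symm⟩
      · exact ⟨⟨(j, i), hgt⟩, Subtype.ext (show stdR (p ^ e) j i = R by rw [hR]; exact stdR_symm.symm)⟩
  rw [← Nat.card_eq_of_bijective _ hbij]
  exact card_pairs n
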